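/- Let n ≥ 3 be an integer, q ∈ (0,1), γ the unique positive root of γ(γ+n−2) = q·β₀(β₀+n−2), and k ∈ (0, (n−2)/2). Then there exists a constant c_B(k) > 0 (one may take c_B(k) = 2k·min(n+2γ, n+2γ−2k−2)) such that for every x ≠ 0, Δ(|x|^γ(1+|x|²)^{−k}) − qL₁^{q−1}|x|^{−2}·|x|^γ(1+|x|²)^{−k} ≤ −c_B(k)·|x|^γ(1+|x|²)^{−(1+k)}. -/

import Mathlib

/-- The Laplacian of `f : ℝⁿ → ℝ` at `x`: the sum of the second partial derivatives
`∂²f/∂xᵢ²` in the coordinate directions. -/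
noncomputable def laplacian {n : ℕ} (f : EuclideanSpace ℝ (Fin n) → ℝ)
    (x : EuclideanSpace ℝ (Fin n)) : ℝ :=
  ∑ i : Fin n,
    fderiv ℝ (fun y => fderiv ℝ f y (EuclideanSpace.single i 1)) x (EuclideanSpace.single i 1)

noncomputable def Fb (γ k t : ℝ) : ℝ := t ^ (γ/2) * (1+t) ^ (-k)

noncomputable def Fb1 (γ k t : ℝ) : ℝ :=
  γ/2 * t ^ (γ/2-1) * (1+t) ^ (-k) + t ^ (γ/2) * (-k * (1+t) ^ (-k-1))

noncomputable def Fb2 (γ k t : ℝ) : ℝ :=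
  (γ/2 * ((γ/2-1) * t ^ (γ/2-2))) * (1+t) ^ (-k)
  + γ/2 * t ^ (γ/2-1) * (-k * (1+t) ^ (-k-1))
  + (γ/2 * t ^ (γ/2-1)) * (-k * (1+t) ^ (-k-1))
  + t ^ (γ/2) * (-k * ((-k-1) * (1+t) ^ (-k-2)))

lemma oneAdd_hasDerivAt (t : ℝ) (ht : 0 < t) (p : ℝ) :
    HasDerivAt (fun u : ℝ => (1+u) ^ p) (p * (1+t) ^ (p-1)) t := by
  have h1 : HasDerivAt (fun u : ℝ => 1 + u) 1 t := (hasDerivAt_id t).const_add 1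
  have := (Real.hasDerivAt_rpow_const (x := 1+t) (p := p)
    (Or.inl (by positivity))).comp t h1
  rw [mul_one] at this; exact this

lemma Fb_hasDerivAt (γ k t : ℝ) (ht : 0 < t) : HasDerivAt (Fb γ k) (Fb1 γ k t) t := by
  have h1 : HasDerivAt (fun u : ℝ => u ^ (γ/2)) (γ/2 * t ^ (γ/2-1)) t :=
    Real.hasDerivAt_rpow_const (Or.inl ht.ne')
  have h2 := oneAdd_hasDerivAt t ht (-k)
  unfold Fb Fb1
  exact h1.mul h2

lemma Fb1_hasDerivAt (γ k t : ℝ) (ht : 0 < t) : HasDerivAt (Fb1 γ k) (Fb2 γ k t) t := by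
  have h1 : HasDerivAt (fun u : ℝ => u ^ (γ/2-1)) ((γ/2-1) * t ^ (γ/2-2)) t := by
    have := Real.hasDerivAt_rpow_const (x := t) (p := γ/2-1) (Or.inl ht.ne')
    convert this using 2; ring
  have h1' : HasDerivAt (fun u : ℝ => γ/2 * u ^ (γ/2-1)) (γ/2 * ((γ/2-1) * t ^ (γ/2-2))) t :=
    h1.const_mul _
  have h2 := oneAdd_hasDerivAt t ht (-k)
  have h3 : HasDerivAt (fun u : ℝ => u ^ (γ/2)) (γ/2 * t ^ (γ/2-1)) t :=
    Real.hasDerivAt_rpow_const (Or.inl ht.ne')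
  have h4 : HasDerivAt (fun u : ℝ => -k * (1+u) ^ (-k-1)) (-k * ((-k-1) * (1+t) ^ (-k-2))) t := by
    have := (oneAdd_hasDerivAt t ht (-k-1)).const_mul (-k)
    rw [show -k-2 = -k-1-1 by ring]; exact this
  have := (h1'.mul h2).add (h3.mul h4)
  refine this.congr_deriv ?_
  unfold Fb2; ring

lemma sq_rpow_half (r γ : ℝ) (hr : 0 ≤ r) : (r ^ 2) ^ (γ/2) = r ^ γ := by
  rw [← Real.rpow_natCast r 2, ← Real.rpow_mul hr, show (2:ℕ)*(γ/2) = γ by push_cast; ring]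

lemma norm_sq_hasFDerivAt {n : ℕ} (y : EuclideanSpace ℝ (Fin n)) :
    HasFDerivAt (fun z : EuclideanSpace ℝ (Fin n) => ‖z‖ ^ 2) (2 • (innerSL ℝ y)) y :=
  (hasStrictFDerivAt_norm_sq y).hasFDerivAt

lemma norm_sq_sum {n : ℕ} (x : EuclideanSpace ℝ (Fin n)) :
    ∑ i : Fin n, (x i) ^ 2 = ‖x‖ ^ 2 := by
  rw [EuclideanSpace.norm_eq, Real.sq_sqrt (by positivity)]
  simp [sq_abs]

lemma lap_eq {n : ℕ} (γ k : ℝ) (x : EuclideanSpace ℝ (Fin n)) (hx : x ≠ 0) :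
    laplacian (fun y => Fb γ k (‖y‖ ^ 2)) x
      = 2*(n:ℝ)*Fb1 γ k (‖x‖^2) + 4*‖x‖^2*Fb2 γ k (‖x‖^2) := by
  have hxn : ‖x‖ ≠ 0 := norm_ne_zero_iff.2 hx
  have hs : 0 < ‖x‖^2 := by positivity
  have main : ∀ i : Fin n,
      fderiv ℝ (fun y => fderiv ℝ (fun z : EuclideanSpace ℝ (Fin n) => Fb γ k (‖z‖^2)) y
          (EuclideanSpace.single i 1)) x (EuclideanSpace.single i 1)
        = 2*Fb1 γ k (‖x‖^2) + (x i)^2 * (4 * Fb2 γ k (‖x‖^2)) := by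
    intro i
    have hEq : (fun y => fderiv ℝ (fun z : EuclideanSpace ℝ (Fin n) => Fb γ k (‖z‖^2)) y
        (EuclideanSpace.single i 1)) =ᶠ[nhds x] (fun y => Fb1 γ k (‖y‖^2)
        * (2 * (innerSL ℝ (EuclideanSpace.single i 1) y))) := by
      filter_upwards [isOpen_compl_singleton.mem_nhds hx] with y hy
      have hy0 : y ≠ 0 := hy
      have hyn : ‖y‖ ≠ 0 := norm_ne_zero_iff.2 hy0
      have hsy : 0 < ‖y‖^2 := by positivity
      have hD : HasFDerivAt (fun z : EuclideanSpace ℝ (Fin n) => Fb γ k (‖z‖^2))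
          (Fb1 γ k (‖y‖^2) • (2 • innerSL ℝ y)) y :=
        by have := (Fb_hasDerivAt γ k _ hsy).comp_hasFDerivAt y (norm_sq_hasFDerivAt y); exact this
      rw [hD.fderiv]
      simp [EuclideanSpace.inner_single_right, real_inner_comm]
    rw [hEq.fderiv_eq]
    have hA : HasFDerivAt (fun y : EuclideanSpace ℝ (Fin n) => Fb1 γ k (‖y‖^2))
        (Fb2 γ k (‖x‖^2) • (2 • innerSL ℝ x)) x :=
      by have := (Fb1_hasDerivAt γ k _ hs).comp_hasFDerivAt x (norm_sq_hasFDerivAt x); exact this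
    have hB : HasFDerivAt
        (fun y : EuclideanSpace ℝ (Fin n) => (2:ℝ) * (innerSL ℝ (EuclideanSpace.single i 1) y))
        ((2:ℝ) • (innerSL ℝ (EuclideanSpace.single i 1))) x :=
      (innerSL ℝ (EuclideanSpace.single i 1)).hasFDerivAt.const_mul (2:ℝ)
    have hAB : HasFDerivAt (fun y => Fb1 γ k (‖y‖^2)
      * (2 * (innerSL ℝ (EuclideanSpace.single i 1) y))) _ x := hA.mul hB
    rw [hAB.fderiv]
    simp [EuclideanSpace.inner_single_right, EuclideanSpace.inner_single_left, EuclideanSpace.single_apply]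
    ring
  unfold laplacian
  rw [Finset.sum_congr rfl fun i _ => main i, Finset.sum_add_distrib, Finset.sum_const,
    Finset.card_univ, Fintype.card_fin, ← Finset.sum_mul, norm_sq_sum, nsmul_eq_mul]
  push_cast
  ring


lemma key_ineq (n : ℕ) (γ k c s : ℝ) (hs : 0 < s) (hk0 : 0 < k)
    (hc1 : c ≤ 2*k*((n : ℝ)+2*γ)) (hc2 : c ≤ 2*k*((n : ℝ)+2*γ-2*k-2)) :
    2*(n : ℝ)*Fb1 γ k s + 4*s*Fb2 γ k s - γ*(γ+(n : ℝ)-2) * (s ^ (γ/2-1) * (1+s) ^ (-k))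
      ≤ -c * (s ^ (γ/2) * (1+s) ^ (-(1+k))) := by
  have h1s : (0:ℝ) < 1 + s := by linarith
  set A := s ^ (γ/2-2) with hAdef
  set P := (1+s) ^ (-k-2) with hPdef
  have hA : 0 < A := Real.rpow_pos_of_pos hs _
  have hP : 0 < P := Real.rpow_pos_of_pos h1s _
  have h1 : s ^ (γ/2) = A * s * s := by
    rw [show γ/2 = γ/2-2 + 1 + 1 by ring, Real.rpow_add hs, Real.rpow_add hs, Real.rpow_one]
  have h2 : s ^ (γ/2-1) = A * s := by
    rw [show γ/2-1 = γ/2-2 + 1 by ring, Real.rpow_add hs, Real.rpow_one]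
  have h3 : (1+s) ^ (-k) = P * (1+s) * (1+s) := by
    rw [show -k = -k-2 + 1 + 1 by ring, Real.rpow_add h1s, Real.rpow_add h1s, Real.rpow_one]
  have h4 : (1+s) ^ (-k-1) = P * (1+s) := by
    rw [show -k-1 = -k-2 + 1 by ring, Real.rpow_add h1s, Real.rpow_one]
  have h5 : (1+s) ^ (-(1+k)) = P * (1+s) := by
    rw [show -(1+k) = -k-2 + 1 by ring, Real.rpow_add h1s, Real.rpow_one]
  unfold Fb1 Fb2
  rw [h1, h2, h3, h4, h5]
  have t1 : 0 ≤ A*P*s*s*(2*k*((n : ℝ)+2*γ) - c) := by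
    have := mul_nonneg (mul_nonneg (mul_nonneg hA.le hP.le) hs.le) hs.le
    exact mul_nonneg this (by linarith)
  have t2 : 0 ≤ A*P*s*s*s*(2*k*((n : ℝ)+2*γ-2*k-2) - c) := by
    have := mul_nonneg (mul_nonneg (mul_nonneg (mul_nonneg hA.le hP.le) hs.le) hs.le) hs.le
    exact mul_nonneg this (by linarith)
  nlinarith [t1, t2]

theorem steady_linearized_weighted_supersolution (n : ℕ) (hn : 3 ≤ n)
    (q : ℝ) (hq0 : 0 < q) (hq1 : q < 1)
    (β₀ L₁ γ : ℝ) (hβ₀ : β₀ = 2 / (1 - q))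
    (hL₁ : L₁ = (β₀ * (β₀ + (n : ℝ) - 2)) ^ (-(1 / (1 - q))))
    (hγpos : 0 < γ) (hγ : γ * (γ + (n : ℝ) - 2) = q * (β₀ * (β₀ + (n : ℝ) - 2)))
    (k : ℝ) (hk0 : 0 < k) (hk1 : k < ((n : ℝ) - 2) / 2)
    (cB : ℝ) (hcB : cB = 2 * k * min ((n : ℝ) + 2 * γ) ((n : ℝ) + 2 * γ - 2 * k - 2)) :
    0 < cB ∧
    ∀ x : EuclideanSpace ℝ (Fin n), x ≠ 0 →
      laplacian (fun y => ‖y‖ ^ γ * (1 + ‖y‖ ^ 2) ^ (-k)) x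
        - q * L₁ ^ (q - 1) * ‖x‖ ^ (-2 : ℝ) * (‖x‖ ^ γ * (1 + ‖x‖ ^ 2) ^ (-k))
      ≤ -cB * (‖x‖ ^ γ * (1 + ‖x‖ ^ 2) ^ (-(1 + k))) := by
  have hn3 : (3:ℝ) ≤ (n:ℝ) := by exact_mod_cast hn
  have hcB0 : 0 < cB := by
    rw [hcB]
    apply mul_pos (by linarith)
    apply lt_min <;> nlinarith
  refine ⟨hcB0, fun x hx => ?_⟩
  -- q * L₁ ^ (q-1) = γ * (γ + n - 2)
  have h1q : (0:ℝ) < 1 - q := by linarith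
  have hβpos : 0 < β₀ := by rw [hβ₀]; positivity
  have hM : 0 < β₀ * (β₀ + (n:ℝ) - 2) := by
    apply mul_pos hβpos; linarith
  have hqL : q * L₁ ^ (q - 1) = γ * (γ + (n:ℝ) - 2) := by
    rw [hL₁, ← Real.rpow_mul hM.le,
      show -(1/(1-q)) * (q-1) = 1 by field_simp; ring, Real.rpow_one, hγ]
  have hfun : (fun y : EuclideanSpace ℝ (Fin n) => ‖y‖ ^ γ * (1 + ‖y‖ ^ 2) ^ (-k))
      = fun y => Fb γ k (‖y‖ ^ 2) := by
    funext y
    rw [Fb, sq_rpow_half _ _ (norm_nonneg y)]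
  rw [hfun, lap_eq γ k x hx, hqL]
  have hr : 0 < ‖x‖ := norm_pos_iff.2 hx
  have e1 : ‖x‖ ^ (-2:ℝ) * ‖x‖ ^ γ = (‖x‖ ^ 2) ^ (γ/2-1) := by
    rw [← Real.rpow_natCast ‖x‖ 2, ← Real.rpow_mul hr.le, ← Real.rpow_add hr]
    congr 1; push_cast; ring
  have e2 : ‖x‖ ^ γ = (‖x‖ ^ 2) ^ (γ/2) := (sq_rpow_half ‖x‖ γ hr.le).symm
  have hc1 : cB ≤ 2*k*((n : ℝ)+2*γ) := by
    rw [hcB]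
    exact mul_le_mul_of_nonneg_left (min_le_left _ _) (by linarith)
  have hc2 : cB ≤ 2*k*((n : ℝ)+2*γ-2*k-2) := by
    rw [hcB]
    exact mul_le_mul_of_nonneg_left (min_le_right _ _) (by linarith)
  have hkey := key_ineq n γ k cB (‖x‖^2) (by positivity) hk0 hc1 hc2
  rw [show γ*(γ+(n:ℝ)-2) * ‖x‖^(-2:ℝ) * (‖x‖^γ * (1+‖x‖^2)^(-k))
      = γ*(γ+(n:ℝ)-2) * ((‖x‖^(-2:ℝ) * ‖x‖^γ) * (1+‖x‖^2)^(-k)) by ring, e1, e2]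
  calc 2*(n:ℝ)*Fb1 γ k (‖x‖^2) + 4*‖x‖^2*Fb2 γ k (‖x‖^2)
      - γ*(γ+(n:ℝ)-2) * ((‖x‖^2)^(γ/2-1) * (1+‖x‖^2)^(-k))
      ≤ -cB * ((‖x‖^2)^(γ/2) * (1+‖x‖^2)^(-(1+k))) := by linarith [hkey]
    _ = -cB * ((‖x‖ ^ 2) ^ (γ/2) * (1 + ‖x‖ ^ 2) ^ (-(1 + k))) := by ring
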